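/- arXiv:1702.02179 — 3 statements merged into one kernel-verified Lean document; each statement's English description precedes it below -/
import Mathlib

section
/- If h is exponentially distributed with rate K and P > 0, then E[log(1 + P·h)] = e^{K/P}·E_1(K/P), where E_1 is the exponential integral E_1(x) = ∫_1^∞ e^{-xt}/t dt. -/
open MeasureTheory Real

/-- The exponential integral `E₁(x) = ∫_1^∞ e^{-xt}/t dt`. -/
noncomputable def E1 (x : ℝ) : ℝ := ∫ t in Set.Ioi (1 : ℝ), Real.exp (-x * t) / t

open Set Filter

lemma aux_integrable1 {a : ℝ} (ha : 0 < a) :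
    IntegrableOn (fun x => Real.exp (-x) * (a / (1 + a * x))) (Set.Ioi (0:ℝ)) := by
  apply Integrable.mono' ((exp_neg_integrableOn_Ioi 0 one_pos).const_mul a)
  · exact ((Real.measurable_exp.comp measurable_neg).mul
      (measurable_const.div (measurable_const.add (measurable_id.const_mul a)))).aestronglyMeasurable
  · filter_upwards [self_mem_ae_restrict measurableSet_Ioi] with x hx
    have hx0 : (0:ℝ) < x := hx
    have h1 : (1:ℝ) ≤ 1 + a * x := by nlinarith
    have h2 : a / (1 + a * x) ≤ a := by
      rw [div_le_iff₀ (by linarith)]; nlinarith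
    have h3 : 0 ≤ a / (1 + a * x) := div_nonneg ha.le (by linarith)
    rw [Real.norm_eq_abs, abs_of_nonneg (mul_nonneg (Real.exp_pos _).le h3), neg_one_mul]
    calc Real.exp (-x) * (a / (1 + a * x)) ≤ Real.exp (-x) * a :=
          mul_le_mul_of_nonneg_left h2 (Real.exp_pos _).le
      _ = a * Real.exp (-x) := mul_comm _ _

lemma aux_integrable2 {a : ℝ} (ha : 0 < a) :
    IntegrableOn (fun x => Real.exp (-x) * Real.log (1 + a * x)) (Set.Ioi (0:ℝ)) := by
  have hG : IntegrableOn (fun x : ℝ => a * (Real.exp (-x) * x ^ ((2:ℝ) - 1))) (Set.Ioi (0:ℝ)) :=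
    (Real.GammaIntegral_convergent (by norm_num : (0:ℝ) < 2)).const_mul a
  apply Integrable.mono' hG
  · exact ((Real.measurable_exp.comp measurable_neg).mul
      (Real.measurable_log.comp (measurable_const.add (measurable_id.const_mul a)))).aestronglyMeasurable
  · filter_upwards [self_mem_ae_restrict measurableSet_Ioi] with x hx
    have hx0 : (0:ℝ) < x := hx
    have h1 : (1:ℝ) ≤ 1 + a * x := by nlinarith
    have hlog0 : 0 ≤ Real.log (1 + a * x) := Real.log_nonneg h1
    have hlog : Real.log (1 + a * x) ≤ a * x := by
      have := Real.log_le_sub_one_of_pos (by linarith : (0:ℝ) < 1 + a * x)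
      linarith
    simp only [Real.norm_eq_abs]
    rw [abs_of_nonneg (mul_nonneg (Real.exp_pos _).le hlog0)]
    have hx1 : x ^ ((2:ℝ) - 1) = x := by norm_num
    rw [hx1]
    calc Real.exp (-x) * Real.log (1 + a * x) ≤ Real.exp (-x) * (a * x) :=
          mul_le_mul_of_nonneg_left hlog (Real.exp_pos _).le
      _ = a * (Real.exp (-x) * x) := by ring

lemma aux_ibp {a : ℝ} (ha : 0 < a) :
    ∫ x in Set.Ioi (0:ℝ), Real.exp (-x) * Real.log (1 + a * x)
      = ∫ x in Set.Ioi (0:ℝ), Real.exp (-x) * (a / (1 + a * x)) := by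
  have hu : ∀ x ∈ Set.Ioi (0:ℝ), HasDerivAt (fun x => Real.log (1 + a * x))
      (a / (1 + a * x)) x := by
    intro x hx
    have hx0 : (0:ℝ) < x := hx
    have hne : (1 + a * x) ≠ 0 := by nlinarith
    have h : HasDerivAt (fun x : ℝ => 1 + a * x) a x := by
      simpa using ((hasDerivAt_id x).const_mul a).const_add 1
    exact h.log hne
  have hv : ∀ x ∈ Set.Ioi (0:ℝ), HasDerivAt (fun x => -Real.exp (-x))
      (Real.exp (-x)) x := by
    intro x _
    have := ((hasDerivAt_neg x).exp).neg
    simpa [Pi.neg_def] using this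
  have huv' : IntegrableOn ((fun x => Real.log (1 + a * x)) * fun x => Real.exp (-x))
      (Set.Ioi (0:ℝ)) := by
    apply IntegrableOn.congr_fun (aux_integrable2 ha) _ measurableSet_Ioi
    intro x _; simp [mul_comm]
  have hu'v : IntegrableOn ((fun x => a / (1 + a * x)) * fun x => -Real.exp (-x))
      (Set.Ioi (0:ℝ)) := by
    apply IntegrableOn.congr_fun (aux_integrable1 ha).neg _ measurableSet_Ioi
    intro x _
    simp only [Pi.mul_apply, Pi.neg_apply]
    ring
  have h_zero : Tendsto ((fun x => Real.log (1 + a * x)) * fun x => -Real.exp (-x))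
      (nhdsWithin 0 (Set.Ioi 0)) (nhds 0) := by
    have hc : ContinuousAt (fun x => Real.log (1 + a * x) * -Real.exp (-x)) 0 := by
      apply ContinuousAt.mul
      · exact (Real.continuousAt_log (by norm_num)).comp (by fun_prop)
      · fun_prop
    have h0 : ContinuousWithinAt (fun x => Real.log (1 + a * x) * -Real.exp (-x))
        (Set.Ioi 0) 0 := hc.continuousWithinAt
    have ht := h0.tendsto
    convert ht using 2
    all_goals simp
  have h_infty : Tendsto ((fun x => Real.log (1 + a * x)) * fun x => -Real.exp (-x))
      atTop (nhds 0) := by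
    have hpos : Tendsto (fun x => Real.log (1 + a * x) * Real.exp (-x)) atTop (nhds 0) := by
      have hg : Tendsto (fun x : ℝ => a * (x ^ 1 * Real.exp (-x))) atTop (nhds 0) := by
        simpa using (tendsto_pow_mul_exp_neg_atTop_nhds_zero 1).const_mul a
      refine squeeze_zero' ?_ ?_ hg
      · filter_upwards [eventually_ge_atTop (0:ℝ)] with x hx
        exact mul_nonneg (Real.log_nonneg (by nlinarith)) (Real.exp_pos _).le
      · filter_upwards [eventually_ge_atTop (0:ℝ)] with x hx
        have hlog : Real.log (1 + a * x) ≤ a * x := by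
          have := Real.log_le_sub_one_of_pos (by nlinarith : (0:ℝ) < 1 + a * x)
          linarith
        calc Real.log (1 + a * x) * Real.exp (-x) ≤ (a * x) * Real.exp (-x) :=
              mul_le_mul_of_nonneg_right hlog (Real.exp_pos _).le
          _ = a * (x ^ 1 * Real.exp (-x)) := by ring
    have := hpos.neg
    simp only [neg_zero] at this
    apply this.congr
    intro x
    simp only [Pi.mul_apply]
    ring
  have key := integral_Ioi_mul_deriv_eq_deriv_mul hu hv huv' hu'v h_zero h_infty
  have l1 : ∫ x in Set.Ioi (0:ℝ), Real.exp (-x) * Real.log (1 + a * x)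
      = ∫ x in Set.Ioi (0:ℝ), Real.log (1 + a * x) * Real.exp (-x) := by
    congr 1; ext x; ring
  have l2 : ∫ x in Set.Ioi (0:ℝ), a / (1 + a * x) * -Real.exp (-x)
      = -∫ x in Set.Ioi (0:ℝ), Real.exp (-x) * (a / (1 + a * x)) := by
    rw [← integral_neg]; congr 1; ext x; ring
  rw [l1, key, l2]; ring

lemma aux_sub {a : ℝ} (ha : 0 < a) :
    Real.exp a⁻¹ * E1 a⁻¹ = ∫ x in Set.Ioi (0:ℝ), Real.exp (-x) * (a / (1 + a * x)) := by
  have h1 : E1 a⁻¹ = ∫ t in Set.Ioi (0:ℝ), Real.exp (-a⁻¹ * (t + 1)) / (t + 1) := by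
    rw [E1]
    have := (measurePreserving_add_right volume (1:ℝ)).setIntegral_preimage_emb
      (measurableEmbedding_addRight 1) (fun t => Real.exp (-a⁻¹ * t) / t) (Set.Ioi 1)
    simp only [Set.preimage_add_const_Ioi, sub_self] at this
    exact this.symm
  have h2 := integral_comp_mul_left_Ioi
    (fun t => Real.exp (-a⁻¹ * (t + 1)) / (t + 1)) 0 ha
  simp only [mul_zero, smul_eq_mul] at h2
  have h3 : (∫ t in Set.Ioi (0:ℝ), Real.exp (-a⁻¹ * (t + 1)) / (t + 1))
      = a * ∫ x in Set.Ioi (0:ℝ), Real.exp (-a⁻¹ * (a * x + 1)) / (a * x + 1) := by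
    rw [h2]; field_simp
  rw [h1, h3, ← mul_assoc, ← integral_const_mul]
  apply setIntegral_congr_fun measurableSet_Ioi
  intro x hx
  have hx0 : (0:ℝ) < x := hx
  have hne : (1 + a * x) ≠ 0 := by nlinarith
  have he : Real.exp (-a⁻¹ * (a * x + 1)) = Real.exp (-x) * Real.exp (-a⁻¹) := by
    rw [← Real.exp_add]
    congr 1
    field_simp
    ring
  simp only
  rw [he]
  rw [div_eq_mul_inv, div_eq_mul_inv]
  have hcomm : a * x + 1 = 1 + a * x := by ring
  rw [hcomm]
  have : Real.exp a⁻¹ * a * (Real.exp (-x) * Real.exp (-a⁻¹) * (1 + a * x)⁻¹)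
      = Real.exp (-x) * (a * (1 + a * x)⁻¹) * (Real.exp a⁻¹ * Real.exp (-a⁻¹)) := by
    ring
  rw [this, ← Real.exp_add, add_neg_cancel, Real.exp_zero, mul_one]

/-- If `h` is exponentially distributed with rate `K` and `P > 0`, then
`E[log(1 + P·h)] = e^{K/P}·E₁(K/P)`; equivalently,
`∫_0^∞ e^{-x}·log(1 + (P/K)·x) dx = e^{K/P}·E₁(K/P)`. -/
theorem stmt_1 (K P : ℝ) (hK : 0 < K) (hP : 0 < P) :
    (∫ x in Set.Ioi (0 : ℝ), K * Real.exp (-K * x) * Real.log (1 + P * x)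
        = Real.exp (K / P) * E1 (K / P))
    ∧ (∫ x in Set.Ioi (0 : ℝ), Real.exp (-x) * Real.log (1 + (P / K) * x)
        = Real.exp (K / P) * E1 (K / P)) := by
  have ha : (0:ℝ) < P / K := div_pos hP hK
  have hinv : (P / K)⁻¹ = K / P := by rw [inv_div]
  have second : ∫ x in Set.Ioi (0 : ℝ), Real.exp (-x) * Real.log (1 + (P / K) * x)
      = Real.exp (K / P) * E1 (K / P) := by
    rw [aux_ibp ha, ← hinv]
    exact (aux_sub ha).symm
  refine ⟨?_, second⟩
  have h2 := integral_comp_mul_left_Ioi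
    (fun y => Real.exp (-y) * Real.log (1 + (P / K) * y)) 0 hK
  simp only [mul_zero, smul_eq_mul] at h2
  have congr1 : ∫ x in Set.Ioi (0 : ℝ), K * Real.exp (-K * x) * Real.log (1 + P * x)
      = ∫ x in Set.Ioi (0 : ℝ), K * (Real.exp (-(K * x)) * Real.log (1 + (P / K) * (K * x))) := by
    apply setIntegral_congr_fun measurableSet_Ioi
    intro x _
    show K * Real.exp (-K * x) * Real.log (1 + P * x)
        = K * (Real.exp (-(K * x)) * Real.log (1 + (P / K) * (K * x)))
    have hpk : P / K * (K * x) = P * x := by field_simp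
    rw [hpk, neg_mul]
    ring
  rw [congr1, integral_const_mul, h2, ← second]
  field_simp
  simp only [mul_comm]
end

section
/- For 0 < m < 1, the function k ↦ k/T(m,k), where T(m,k) = (1-m)·(1-(1-m)^k)/m, is strictly increasing in the positive integer k. -/
lemma key_avg (q : ℝ) (hq0 : 0 < q) (hq1 : q < 1) (k l : ℕ) (hk : 0 < k) (hkl : k < l) :
    (k : ℝ) * ∑ i ∈ Finset.range l, q ^ i < (l : ℝ) * ∑ i ∈ Finset.range k, q ^ i := by
  have hsplit : ∑ i ∈ Finset.range l, q ^ i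
      = ∑ i ∈ Finset.range k, q ^ i + ∑ i ∈ Finset.Ico k l, q ^ i := by
    rw [Finset.range_eq_Ico, ← Finset.sum_Ico_consecutive _ (Nat.zero_le k) hkl.le, ← Finset.range_eq_Ico]
  have hT : ∑ i ∈ Finset.Ico k l, q ^ i ≤ ((l - k : ℕ) : ℝ) * q ^ k := by
    calc ∑ i ∈ Finset.Ico k l, q ^ i ≤ ∑ _i ∈ Finset.Ico k l, q ^ k := by
          apply Finset.sum_le_sum
          intro i hi
          exact pow_le_pow_of_le_one hq0.le hq1.le (Finset.mem_Ico.mp hi).1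
      _ = ((l - k : ℕ) : ℝ) * q ^ k := by
          rw [Finset.sum_const, Nat.card_Ico, nsmul_eq_mul]
  have hS : (k : ℝ) * q ^ k < ∑ i ∈ Finset.range k, q ^ i := by
    have h := Finset.sum_lt_sum_of_nonempty (Finset.nonempty_range_iff.mpr hk.ne')
      (f := fun _ => q ^ k) (g := fun i => q ^ i) ?_
    · simpa [mul_comm] using h
    · intro i hi
      exact pow_lt_pow_right_of_lt_one₀ hq0 hq1 (Finset.mem_range.mp hi)
  have hc : ((l - k : ℕ) : ℝ) = (l : ℝ) - k := by
    rw [Nat.cast_sub hkl.le]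
  have hlk : (0 : ℝ) < (l : ℝ) - k := by
    have : (k : ℝ) < l := by exact_mod_cast hkl
    linarith
  have hk' : (0 : ℝ) ≤ (k : ℝ) := Nat.cast_nonneg k
  rw [hc] at hT
  nlinarith [mul_le_mul_of_nonneg_left hT hk', mul_lt_mul_of_pos_left hS hlk]

/-- For `0 < m < 1`, the map `k ↦ k/T(m,k) = m·k/((1-m)·(1-(1-m)^k))` is
strictly increasing over positive integers `k`. -/
theorem stmt_6 (m : ℝ) (hm0 : 0 < m) (hm1 : m < 1) :
    ∀ k l : ℕ, 0 < k → k < l →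
      m * k / ((1 - m) * (1 - (1 - m) ^ k))
        < m * l / ((1 - m) * (1 - (1 - m) ^ l)) := by
  intro k l hk hkl
  set q : ℝ := 1 - m with hq
  have hq0 : 0 < q := by linarith
  have hq1 : q < 1 := by linarith
  have hl : 0 < l := hk.trans hkl
  have hpk : q ^ k < 1 := pow_lt_one₀ hq0.le hq1 hk.ne'
  have hpl : q ^ l < 1 := pow_lt_one₀ hq0.le hq1 hl.ne'
  have hdk : 0 < (1 - m) * (1 - q ^ k) := by
    apply mul_pos hq0; linarith
  have hdl : 0 < (1 - m) * (1 - q ^ l) := by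
    apply mul_pos hq0; linarith
  rw [div_lt_div_iff₀ hdk hdl]
  have hgk : 1 - q ^ k = m * ∑ i ∈ Finset.range k, q ^ i := by
    have := geom_sum_mul q k
    nlinarith [this]
  have hgl : 1 - q ^ l = m * ∑ i ∈ Finset.range l, q ^ i := by
    have := geom_sum_mul q l
    nlinarith [this]
  rw [hgk, hgl]
  have hkey := key_avg q hq0 hq1 k l hk hkl
  nlinarith [mul_lt_mul_of_pos_left hkey (mul_pos (mul_pos hm0 hm0) hq0)]
end

section
/- Let h_1,...,h_K be i.i.d. Exp(1) random variables, P > 0, and φ_k ≥ m·k/(1-m) for all k, with 0 < m < 1. With U(z) = #{k : h_k ≥ z} and h_{π_1} ≥ ... ≥ h_{π_K} the decreasing rearrangement, E[max_k φ_k·log(1 + h_{π_k}·P)] ≥ K·max_{z≥0} (m/(1-m))·e^{-z}·log(1 + P·z). -/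
open MeasureTheory ProbabilityTheory Finset Real


lemma expTail {z : ℝ} (hz : 0 ≤ z) :
    expMeasure 1 (Set.Ici z) = ENNReal.ofReal (Real.exp (-z)) := by
  rw [expMeasure, gammaMeasure, withDensity_apply _ measurableSet_Ici]
  have h1 : ∀ x ∈ Set.Ici z, gammaPDF 1 1 x = ENNReal.ofReal (Real.exp (-x)) := by
    intro x hx
    have hx0 : (0:ℝ) ≤ x := le_trans hz hx
    show exponentialPDF 1 x = _
    rw [exponentialPDF_of_nonneg hx0]
    norm_num
  rw [setLIntegral_congr_fun measurableSet_Ici h1]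
  have hint : IntegrableOn (fun x => Real.exp (-x)) (Set.Ici z) := by
    rw [integrableOn_Ici_iff_integrableOn_Ioi]
    have := exp_neg_integrableOn_Ioi z (b := 1) one_pos
    simpa using this
  rw [← ofReal_integral_eq_lintegral_ofReal hint
    (Filter.Eventually.of_forall fun x => (Real.exp_pos _).le)]
  rw [MeasureTheory.integral_Ici_eq_integral_Ioi, integral_exp_neg_Ioi]

lemma expIio : expMeasure 1 (Set.Iio 0) = 0 := by
  rw [expMeasure, gammaMeasure, withDensity_apply _ measurableSet_Iio]
  exact lintegral_exponentialPDF_of_nonpos le_rfl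

lemma expIntLog {P : ℝ} (hP : 0 < P) :
    Integrable (fun x => Real.log (1 + x * P)) (expMeasure 1) := by
  rw [expMeasure, gammaMeasure]
  have hm : Measurable (gammaPDF 1 1) := (measurable_gammaPDFReal 1 1).ennreal_ofReal
  rw [integrable_withDensity_iff hm
    (Filter.Eventually.of_forall fun x => ENNReal.ofReal_lt_top)]
  have hmeas : Measurable fun x : ℝ => Real.log (1 + x * P) * (gammaPDF 1 1 x).toReal := by
    apply Measurable.mul
    · exact Real.measurable_log.comp (measurable_const.add (measurable_id.mul_const P))
    · exact ((measurable_gammaPDFReal 1 1).ennreal_ofReal).ennreal_toReal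
  have hGint : Integrable ((Set.Ioi (0:ℝ)).indicator fun x => Real.exp (-x) * x * P) := by
    rw [integrable_indicator_iff measurableSet_Ioi]
    have h2 := Real.GammaIntegral_convergent (s := 2) (by norm_num)
    have : IntegrableOn (fun x => Real.exp (-x) * x) (Set.Ioi 0) := by
      apply h2.congr_fun ?_ measurableSet_Ioi
      intro x hx
      norm_num [Real.rpow_one]
    exact this.mul_const P
  apply hGint.mono' hmeas.aestronglyMeasurable
  apply Filter.Eventually.of_forall
  intro x
  by_cases hx : 0 < x
  · have hpdf : (gammaPDF 1 1 x).toReal = Real.exp (-x) := by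
      show (exponentialPDF 1 x).toReal = _
      rw [exponentialPDF_of_nonneg hx.le]
      rw [ENNReal.toReal_ofReal (by positivity)]
      norm_num
    rw [Set.indicator_of_mem (Set.mem_Ioi.mpr hx), hpdf]
    have h1 : (0:ℝ) ≤ Real.log (1 + x * P) :=
      Real.log_nonneg (by nlinarith)
    rw [Real.norm_eq_abs, abs_mul, abs_of_nonneg h1, abs_of_nonneg (Real.exp_pos _).le]
    have hlog : Real.log (1 + x * P) ≤ x * P := by
      have := Real.log_le_sub_one_of_pos (x := 1 + x * P) (by nlinarith)
      linarith
    have : Real.log (1 + x * P) * Real.exp (-x) ≤ (x * P) * Real.exp (-x) :=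
      mul_le_mul_of_nonneg_right hlog (Real.exp_pos _).le
    calc Real.log (1 + x * P) * Real.exp (-x) ≤ (x * P) * Real.exp (-x) := this
      _ = Real.exp (-x) * x * P := by ring
  · rw [Set.indicator_of_notMem (by simpa using hx)]
    rcases eq_or_lt_of_le (not_lt.mp hx) with h | h
    · subst h
      simp
    · rw [gammaPDF_of_neg h]
      simp


lemma pigeon {K : ℕ} (g : Fin K → ℝ) (ee : Equiv.Perm (Fin K))
    (hs : ∀ i j : Fin K, i ≤ j → g (ee j) ≤ g (ee i))
    (s : Finset (Fin K)) (n : ℕ) (hn : n < K) (hcard : n + 1 ≤ s.card) :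
    ∃ i ∈ s, g i ≤ g (ee ⟨n, hn⟩) := by
  classical
  have ht : (s.image ee.symm).card = s.card :=
    Finset.card_image_of_injective _ ee.symm.injective
  have hex : ∃ j ∈ s.image ee.symm, (⟨n, hn⟩ : Fin K) ≤ j := by
    by_contra hc
    push_neg at hc
    have hsub : s.image ee.symm ⊆ Finset.Iio ⟨n, hn⟩ :=
      fun j hj => Finset.mem_Iio.mpr (hc j hj)
    have := Finset.card_le_card hsub
    simp only [Fin.card_Iio, Fin.val_mk, ht] at this
    omega
  obtain ⟨j, hjt, hjn⟩ := hex
  obtain ⟨i, his, hij⟩ := Finset.mem_image.mp hjt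
  refine ⟨i, his, ?_⟩
  have : ee j = i := by rw [← hij]; simp
  rw [← this]
  exact hs _ _ hjn

noncomputable def kthMax {K : ℕ} (g : Fin K → ℝ) (k : Fin K) : ℝ :=
  ((Finset.univ.powersetCard (k.1 + 1)).attach).sup'
    (Finset.attach_nonempty_iff.mpr (Finset.powersetCard_nonempty.mpr
      (by rw [Finset.card_univ, Fintype.card_fin]; omega)))
    (fun s => s.1.inf'
      (Finset.card_pos.mp (by rw [(Finset.mem_powersetCard.mp s.2).2]; omega)) g)

lemma kthMax_eq {K : ℕ} (g : Fin K → ℝ) (ee : Equiv.Perm (Fin K))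
    (hs : ∀ i j : Fin K, i ≤ j → g (ee j) ≤ g (ee i)) (k : Fin K) :
    kthMax g k = g (ee k) := by
  classical
  apply le_antisymm
  · apply Finset.sup'_le
    intro s _
    obtain ⟨i, his, hig⟩ := pigeon g ee hs s.1 k.1 k.isLt
      (by rw [(Finset.mem_powersetCard.mp s.2).2])
    calc s.1.inf' _ g ≤ g i := Finset.inf'_le _ his
      _ ≤ g (ee ⟨k.1, k.isLt⟩) := hig
      _ = g (ee k) := by congr
  · set s₀ : Finset (Fin K) := (Finset.Iic k).image ee with hs₀
    have hmem : s₀ ∈ Finset.univ.powersetCard (k.1 + 1) := by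
      rw [Finset.mem_powersetCard]
      refine ⟨Finset.subset_univ _, ?_⟩
      rw [hs₀, Finset.card_image_of_injective _ ee.injective, Fin.card_Iic]
    refine le_trans ?_ (Finset.le_sup' _ (Finset.mem_attach _ ⟨s₀, hmem⟩))
    apply Finset.le_inf'
    intro i hi
    obtain ⟨j, hjk, rfl⟩ := Finset.mem_image.mp hi
    exact hs j k (Finset.mem_Iic.mp hjk)

lemma my_measurable_inf' {δ : Type*} [MeasurableSpace δ] {ι : Type*} {s : Finset ι}
    (hs : s.Nonempty) {f : ι → δ → ℝ} (hf : ∀ n ∈ s, Measurable (f n)) :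
    Measurable (s.inf' hs f) :=
  Finset.inf'_induction hs _ (fun _f hf _g hg => hf.inf hg) hf

lemma kthMax_measurable {K : ℕ} {Ω : Type*} [MeasurableSpace Ω]
    (h : Fin K → Ω → ℝ) (hmeas : ∀ i, Measurable (h i)) (k : Fin K) :
    Measurable (fun ω => kthMax (fun i => h i ω) k) := by
  classical
  have : (fun ω => kthMax (fun i => h i ω) k) =
      ((Finset.univ.powersetCard (k.1 + 1)).attach).sup'
        (Finset.attach_nonempty_iff.mpr (Finset.powersetCard_nonempty.mpr
          (by rw [Finset.card_univ, Fintype.card_fin]; omega)))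
        (fun s => s.1.inf'
          (Finset.card_pos.mp (by rw [(Finset.mem_powersetCard.mp s.2).2]; omega)) h) := by
    funext ω
    rw [Finset.sup'_apply]
    unfold kthMax
    congr 1
    funext s
    rw [Finset.inf'_apply]
  rw [this]
  exact Finset.measurable_sup' _ fun s _ => my_measurable_inf' _ fun i _ => hmeas i

/-- Lower bound for the selection scheme: for i.i.d. `Exp(1)` gains
`h₁,...,h_K`, `P > 0`, `0 < m < 1` and weights `φ_k ≥ m·k/(1-m)`, with `σ ω`
a permutation sorting the gains decreasingly,
`E[max_k φ_k·log(1 + h_{σ_k}·P)] ≥ K·max_{z ≥ 0} (m/(1-m))·e^{-z}·log(1+P·z)`. -/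
theorem stmt_11 {Ω : Type*} [MeasurableSpace Ω] (μ : Measure Ω)
    [IsProbabilityMeasure μ] (K : ℕ) (hK : 0 < K) (P m : ℝ) (hP : 0 < P)
    (hm0 : 0 < m) (hm1 : m < 1)
    (φ : ℕ → ℝ) (hφ0 : φ 0 = 0) (hφnn : ∀ n, 0 ≤ φ n)
    (hφlb : ∀ n, m * n / (1 - m) ≤ φ n)
    (h : Fin K → Ω → ℝ) (hmeas : ∀ k, Measurable (h k))
    (hindep : iIndepFun h μ)
    (hlaw : ∀ k, Measure.map (h k) μ = expMeasure 1)
    (σ : Ω → Equiv.Perm (Fin K))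
    (hsort : ∀ ω, ∀ i j : Fin K, i ≤ j → h (σ ω j) ω ≤ h (σ ω i) ω) :
    K * sSup ((fun z : ℝ => m / (1 - m) * Real.exp (-z) * Real.log (1 + P * z))
        '' Set.Ici 0)
      ≤ ∫ ω, (Finset.univ.sup'
          (Finset.univ_nonempty_iff.mpr (Fin.pos_iff_nonempty.mp hK))
          (fun k : Fin K => φ (k.1 + 1) * Real.log (1 + h (σ ω k) ω * P))) ∂μ := by
  classical
  have hm1' : (0:ℝ) < 1 - m := by linarith
  set ne : (Finset.univ : Finset (Fin K)).Nonempty :=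
    Finset.univ_nonempty_iff.mpr (Fin.pos_iff_nonempty.mp hK) with hne
  set F : Ω → ℝ := fun ω => Finset.univ.sup' ne
    (fun k : Fin K => φ (k.1 + 1) * Real.log (1 + h (σ ω k) ω * P)) with hF
  -- F equals a measurable function
  have hFmeas : Measurable F := by
    have hFF' : F = fun ω => Finset.univ.sup' ne
        (fun k : Fin K => φ (k.1 + 1) * Real.log (1 + kthMax (fun i => h i ω) k * P)) := by
      funext ω
      apply Finset.sup'_congr _ rfl
      intro k _
      rw [kthMax_eq (fun i => h i ω) (σ ω) (fun i j hij => hsort ω i j hij) k]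
    rw [hFF']
    have : (fun ω => Finset.univ.sup' ne
        (fun k : Fin K => φ (k.1 + 1) * Real.log (1 + kthMax (fun i => h i ω) k * P)))
        = Finset.univ.sup' ne
        (fun (k : Fin K) (ω : Ω) => φ (k.1 + 1) * Real.log (1 + kthMax (fun i => h i ω) k * P)) := by
      funext ω
      rw [Finset.sup'_apply]
    rw [this]
    apply Finset.measurable_sup'
    intro k _
    exact (Real.measurable_log.comp
      (measurable_const.add ((kthMax_measurable h hmeas k).mul_const P))).const_mul _
  -- a.e. all h nonneg
  have hnn : ∀ᵐ ω ∂μ, ∀ i, 0 ≤ h i ω := by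
    rw [MeasureTheory.ae_all_iff]
    intro i
    rw [ae_iff]
    have : {ω | ¬ 0 ≤ h i ω} = h i ⁻¹' (Set.Iio 0) := by
      ext ω; simp [not_le]
    rw [this, ← Measure.map_apply (hmeas i) measurableSet_Iio, hlaw i, expIio]
  -- F nonneg where h nonneg
  have hF0 : ∀ ω, (∀ i, 0 ≤ h i ω) → 0 ≤ F ω := by
    intro ω hω
    refine le_trans ?_ (Finset.le_sup' _ (Finset.mem_univ (⟨0, hK⟩ : Fin K)))
    exact mul_nonneg (hφnn _) (Real.log_nonneg (by nlinarith [hω (σ ω ⟨0, hK⟩)]))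
  -- integrability of the single log terms
  have hint_i : ∀ i : Fin K, Integrable (fun ω => Real.log (1 + h i ω * P)) μ := by
    intro i
    have hgm : AEStronglyMeasurable (fun x : ℝ => Real.log (1 + x * P)) (μ.map (h i)) :=
      (Real.measurable_log.comp
        (measurable_const.add (measurable_id.mul_const P))).aestronglyMeasurable
    exact (integrable_map_measure hgm (hmeas i).aemeasurable).mp
      (by rw [hlaw i]; exact expIntLog hP)
  -- dominating function
  set B : ℝ := ∑ k : Fin K, φ (k.1 + 1) with hB
  have hB0 : 0 ≤ B := Finset.sum_nonneg fun k _ => hφnn _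
  have hGint : Integrable (fun ω => B * ∑ i : Fin K, Real.log (1 + h i ω * P)) μ :=
    (integrable_finset_sum Finset.univ (fun i _ => hint_i i)).const_mul B
  have hbound : ∀ ω, (∀ i, 0 ≤ h i ω) →
      ‖F ω‖ ≤ B * ∑ i : Fin K, Real.log (1 + h i ω * P) := by
    intro ω hω
    have hlognn : ∀ i : Fin K, 0 ≤ Real.log (1 + h i ω * P) :=
      fun i => Real.log_nonneg (by nlinarith [hω i])
    rw [Real.norm_eq_abs, abs_of_nonneg (hF0 ω hω)]
    apply Finset.sup'_le
    intro k _
    have h1 : φ (k.1 + 1) ≤ B :=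
      Finset.single_le_sum (f := fun i : Fin K => φ (i.1 + 1)) (fun i _ => hφnn _)
        (Finset.mem_univ k)
    have h2 : Real.log (1 + h (σ ω k) ω * P) ≤ ∑ i : Fin K, Real.log (1 + h i ω * P) :=
      Finset.single_le_sum (fun i _ => hlognn i) (Finset.mem_univ (σ ω k))
    exact mul_le_mul h1 h2 (hlognn (σ ω k)) hB0
  have hFint : Integrable F μ :=
    Integrable.mono' hGint hFmeas.aestronglyMeasurable
      (hnn.mono fun ω hω => hbound ω hω)
  have hI0 : 0 ≤ ∫ ω, F ω ∂μ :=
    integral_nonneg_of_ae (hnn.mono fun ω hω => hF0 ω hω)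
  -- key inequality for each z
  have key : ∀ z : ℝ, 0 ≤ z →
      (K : ℝ) * (m / (1 - m) * Real.exp (-z) * Real.log (1 + P * z)) ≤ ∫ ω, F ω ∂μ := by
    intro z hz
    set c : ℝ := m / (1 - m) * Real.log (1 + P * z) with hc
    have hlogz : 0 ≤ Real.log (1 + P * z) := Real.log_nonneg (by nlinarith)
    have hc0 : 0 ≤ c := mul_nonneg (by positivity) hlogz
    set Nf : Ω → ℝ := fun ω => ((Finset.univ.filter fun i => z ≤ h i ω).card : ℝ) with hNf
    have hNfsum : Nf = fun ω => ∑ i : Fin K,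
        (Set.indicator (h i ⁻¹' Set.Ici z) (fun _ => (1:ℝ)) ω) := by
      funext ω
      rw [hNf]
      simp only [Finset.card_filter]
      push_cast
      apply Finset.sum_congr rfl
      intro i _
      by_cases hi : z ≤ h i ω
      · simp [Set.indicator_apply, hi]
      · simp [Set.indicator_apply, hi]
    have hind_int : ∀ i : Fin K,
        Integrable (fun ω => Set.indicator (h i ⁻¹' Set.Ici z) (fun _ => (1:ℝ)) ω) μ := by
      intro i
      exact (integrable_const (1:ℝ)).indicator ((hmeas i) measurableSet_Ici)
    have hNfint : Integrable Nf μ := by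
      rw [hNfsum]
      exact integrable_finset_sum Finset.univ (fun i _ => hind_int i)
    have hNfintegral : ∫ ω, Nf ω ∂μ = K * Real.exp (-z) := by
      rw [hNfsum]
      rw [integral_finset_sum Finset.univ (fun i _ => hind_int i)]
      have : ∀ i : Fin K, ∫ ω, Set.indicator (h i ⁻¹' Set.Ici z) (fun _ => (1:ℝ)) ω ∂μ
          = Real.exp (-z) := by
        intro i
        rw [integral_indicator_const (1:ℝ) ((hmeas i) measurableSet_Ici)]
        rw [measureReal_def, ← Measure.map_apply (hmeas i) measurableSet_Ici, hlaw i, expTail hz]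
        rw [ENNReal.toReal_ofReal (Real.exp_pos _).le]
        simp
      rw [Finset.sum_congr rfl (fun i _ => this i)]
      simp [mul_comm]
    -- pointwise bound
    have hpt : ∀ᵐ ω ∂μ, c * Nf ω ≤ F ω := by
      refine hnn.mono fun ω hω => ?_
      set n : ℕ := (Finset.univ.filter fun i => z ≤ h i ω).card with hn
      rcases Nat.eq_zero_or_pos n with h0 | hpos
      · have : Nf ω = 0 := by rw [hNf]; simp only [← hn, h0]; simp
        rw [this, mul_zero]
        exact hF0 ω hω
      · have hnK : n ≤ K := by
          rw [hn]
          calc (Finset.univ.filter fun i => z ≤ h i ω).card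
              ≤ (Finset.univ : Finset (Fin K)).card := Finset.card_le_card (Finset.filter_subset _ _)
            _ = K := by simp
        have hn1K : n - 1 < K := by omega
        obtain ⟨i, hiA, hile⟩ := pigeon (fun i => h i ω) (σ ω)
          (fun i j hij => hsort ω i j hij)
          (Finset.univ.filter fun i => z ≤ h i ω) (n - 1) hn1K (by omega)
        have hzi : z ≤ h i ω := (Finset.mem_filter.mp hiA).2
        set k₀ : Fin K := ⟨n - 1, hn1K⟩ with hk₀
        have hzk : z ≤ h (σ ω k₀) ω := le_trans hzi hile
        have hterm : φ n * Real.log (1 + h (σ ω k₀) ω * P) ≤ F ω := by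
          have : k₀.1 + 1 = n := by show n - 1 + 1 = n; omega
          refine le_trans (le_of_eq ?_) (Finset.le_sup' _ (Finset.mem_univ k₀))
          rw [this]
        refine le_trans ?_ hterm
        have hNfn : Nf ω = (n : ℝ) := by rw [hNf, hn]
        rw [hNfn, hc]
        have hloglog : Real.log (1 + P * z) ≤ Real.log (1 + h (σ ω k₀) ω * P) := by
          apply Real.log_le_log (by nlinarith)
          nlinarith
        calc m / (1 - m) * Real.log (1 + P * z) * n
            = (m * n / (1 - m)) * Real.log (1 + P * z) := by ring
          _ ≤ φ n * Real.log (1 + h (σ ω k₀) ω * P) :=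
            mul_le_mul (hφlb n) hloglog hlogz
              (le_trans (by positivity) (hφlb n))
    have := integral_mono_ae (hNfint.const_mul c) hFint hpt
    rw [MeasureTheory.integral_const_mul, hNfintegral] at this
    calc (K : ℝ) * (m / (1 - m) * Real.exp (-z) * Real.log (1 + P * z))
        = c * ((K : ℝ) * Real.exp (-z)) := by rw [hc]; ring
      _ ≤ ∫ ω, F ω ∂μ := this
  -- conclude
  have hKpos : (0:ℝ) < K := Nat.cast_pos.mpr hK
  have hsup : sSup ((fun z : ℝ => m / (1 - m) * Real.exp (-z) * Real.log (1 + P * z))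
      '' Set.Ici 0) ≤ (∫ ω, F ω ∂μ) / K := by
    apply Real.sSup_le
    · rintro y ⟨z, hz, rfl⟩
      rw [le_div_iff₀ hKpos]
      calc (fun z : ℝ => m / (1 - m) * Real.exp (-z) * Real.log (1 + P * z)) z * K
          = (K : ℝ) * (m / (1 - m) * Real.exp (-z) * Real.log (1 + P * z)) := by ring
        _ ≤ ∫ ω, F ω ∂μ := key z hz
    · exact div_nonneg hI0 hKpos.le
  calc (K : ℝ) * sSup ((fun z : ℝ => m / (1 - m) * Real.exp (-z) * Real.log (1 + P * z))
      '' Set.Ici 0) ≤ (K : ℝ) * ((∫ ω, F ω ∂μ) / K) :=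
        mul_le_mul_of_nonneg_left hsup hKpos.le
    _ = ∫ ω, F ω ∂μ := by field_simp
end
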